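/- (Qubit three-MUB uncertainty relation with mixedness) For any density operator ρ on a two-dimensional Hilbert space and the three mutually unbiased bases x, y, z (eigenbases of the Pauli operators), H(x) + H(y) + H(z) ≥ 2 log 2 + S(ρ), where H(·) denotes the Shannon entropy of the measurement outcome distribution and S is the von Neumann entropy. -/

import Mathlib

open scoped Kronecker ComplexOrder
open Matrix

noncomputable section

variable {n : Type*} [Fintype n] [DecidableEq n]

/-- Apply a real function to a (Hermitian) matrix via the spectral theorem. -/
def matFun (f : ℝ → ℝ) (A : Matrix n n ℂ) : Matrix n n ℂ :=
  if h : A.IsHermitian then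
    (h.eigenvectorUnitary : Matrix n n ℂ) *
      Matrix.diagonal (fun i => (f (h.eigenvalues i) : ℂ)) *
      (star (h.eigenvectorUnitary : Matrix n n ℂ))
  else 0

/-- Matrix logarithm (on the support; `log 0 = 0` in `Real.log`). -/
def matLog : Matrix n n ℂ → Matrix n n ℂ := matFun Real.log

/-- Matrix square root via the spectral theorem. -/
def matSqrt : Matrix n n ℂ → Matrix n n ℂ := matFun Real.sqrt

/-- Von Neumann entropy `S(ρ) = -Tr(ρ log ρ)`. -/
def vN (ρ : Matrix n n ℂ) : ℝ := -(Matrix.trace (ρ * matLog ρ)).re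

/-- Quantum relative entropy `S(A‖B) = Tr(A log A) - Tr(A log B)`. -/
def relEnt (A B : Matrix n n ℂ) : ℝ :=
  (Matrix.trace (A * matLog A)).re - (Matrix.trace (A * matLog B)).re

/-- Shannon entropy of a probability vector. -/
def shannon {ι : Type*} [Fintype ι] (p : ι → ℝ) : ℝ := -∑ j, p j * Real.log (p j)

/-- Largest eigenvalue of a Hermitian matrix. -/
def maxEig (A : Matrix n n ℂ) : ℝ :=
  if h : A.IsHermitian then ⨆ i, h.eigenvalues i else 0

/-- Squared operator (sup) norm `‖A‖_∞² = λmax(AᴴA)`. -/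
def opNormSq (A : Matrix n n ℂ) : ℝ := maxEig (Aᴴ * A)

/-- `r(P,Q) = max_{j,k} ‖√P_j √Q_k‖_∞²`. -/
def rOverlap {ι κ : Type*} [Fintype ι] [Fintype κ]
    (P : ι → Matrix n n ℂ) (Q : κ → Matrix n n ℂ) : ℝ :=
  ⨆ j, ⨆ k, opNormSq (matSqrt (P j) * matSqrt (Q k))

/-- A density operator: positive semidefinite with unit trace. -/
def IsDensity (ρ : Matrix n n ℂ) : Prop := ρ.PosSemidef ∧ Matrix.trace ρ = 1

/-- A (finite) POVM. -/
def IsPOVM {ι : Type*} [Fintype ι] (P : ι → Matrix n n ℂ) : Prop :=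
  (∀ j, (P j).PosSemidef) ∧ ∑ j, P j = 1

/-- A rank-1 POVM: every element is of the form `|x⟩⟨x|`. -/
def IsRankOnePOVM {ι : Type*} [Fintype ι] (P : ι → Matrix n n ℂ) : Prop :=
  IsPOVM P ∧ ∀ j, ∃ x : n → ℂ, P j = Matrix.vecMulVec x (star x)

/-- The rank-one projector `|x⟩⟨x|` onto the vector `x`. -/
def projVec (x : n → ℂ) : Matrix n n ℂ := Matrix.vecMulVec x (star x)

/-- A family of unit vectors forming an orthonormal basis. -/
def IsONBasis (v : n → (n → ℂ)) : Prop :=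
  ∀ j k, (∑ i, (starRingEnd ℂ) (v j i) * v k i) = if j = k then 1 else 0

/-- Two bases are mutually unbiased. -/
def IsMU (v w : n → (n → ℂ)) : Prop :=
  ∀ j k, ‖∑ i, (starRingEnd ℂ) (v j i) * w k i‖ ^ 2 = 1 / (Fintype.card n : ℝ)

/-- A pure state (a rank-one density operator). -/
def IsPure (ρ : Matrix n n ℂ) : Prop :=
  ∃ ψ : n → ℂ, ρ = Matrix.vecMulVec ψ (star ψ)


/-- A projective decomposition of the identity: orthogonal projectors summing to `I`. -/
def IsProjDecomp {ι : Type*} [Fintype ι] (Pr : ι → Matrix n n ℂ) : Prop :=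
  (∀ j, (Pr j).IsHermitian ∧ Pr j * Pr j = Pr j) ∧ ∑ j, Pr j = 1

variable {α β γ : Type*} [Fintype α] [DecidableEq α] [Fintype β] [DecidableEq β]
  [Fintype γ] [DecidableEq γ]

/-- Partial trace over the first factor. -/
def ptrFst (ρ : Matrix (α × β) (α × β) ℂ) : Matrix β β ℂ :=
  Matrix.of fun j j' => ∑ i, ρ (i, j) (i, j')

/-- Partial trace over the second factor. -/
def ptrSnd (ρ : Matrix (α × β) (α × β) ℂ) : Matrix α α ℂ :=
  Matrix.of fun i i' => ∑ j, ρ (i, j) (i', j)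

/-- `Tr_a[(P ⊗ I) ρ_{ab}]`, the unnormalized conditional state on `b`. -/
def condB (P : Matrix α α ℂ) (ρab : Matrix (α × β) (α × β) ℂ) : Matrix β β ℂ :=
  ptrFst ((P ⊗ₖ (1 : Matrix β β ℂ)) * ρab)

/-- Probability of POVM element `P` on the `a` part of `ρ_{ab}`. -/
def probB (P : Matrix α α ℂ) (ρab : Matrix (α × β) (α × β) ℂ) : ℝ :=
  (Matrix.trace ((P ⊗ₖ (1 : Matrix β β ℂ)) * ρab)).re

/-- Holevo quantity `χ(P, b) = S(ρ_b) - ∑_j p_j S(ρ_{bj})`. -/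
def holevo {ι : Type*} [Fintype ι] (P : ι → Matrix α α ℂ)
    (ρab : Matrix (α × β) (α × β) ℂ) : ℝ :=
  vN (ptrFst ρab) -
    ∑ j, probB (P j) ρab * vN ((probB (P j) ρab)⁻¹ • condB (P j) ρab)

/-- Missing information `H(P|b) = H({p_j}) - χ(P, b)`. -/
def missing {ι : Type*} [Fintype ι] (P : ι → Matrix α α ℂ)
    (ρab : Matrix (α × β) (α × β) ℂ) : ℝ :=
  shannon (fun j => probB (P j) ρab) - holevo P ρab

/-- Tripartite reduction `ρ_{ab}` from `ρ_{abc}` (indices `α × β × γ`). -/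
def redAB (ρ : Matrix (α × β × γ) (α × β × γ) ℂ) : Matrix (α × β) (α × β) ℂ :=
  Matrix.of fun x y => ∑ k, ρ (x.1, x.2, k) (y.1, y.2, k)

/-- Tripartite reduction `ρ_{ac}` from `ρ_{abc}`. -/
def redAC (ρ : Matrix (α × β × γ) (α × β × γ) ℂ) : Matrix (α × γ) (α × γ) ℂ :=
  Matrix.of fun x y => ∑ j, ρ (x.1, j, x.2) (y.1, j, y.2)

/-- Tripartite reduction `ρ_a`. -/
def redA (ρ : Matrix (α × β × γ) (α × β × γ) ℂ) : Matrix α α ℂ :=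
  ptrSnd (redAB ρ)

/-- Tripartite reduction `ρ_b`. -/
def redB (ρ : Matrix (α × β × γ) (α × β × γ) ℂ) : Matrix β β ℂ :=
  ptrFst (redAB ρ)

/-- Tripartite reduction `ρ_c`. -/
def redC (ρ : Matrix (α × β × γ) (α × β × γ) ℂ) : Matrix γ γ ℂ :=
  ptrFst (redAC ρ)

end
/-- The eigenbasis of the Pauli `Z` operator (standard basis). -/
noncomputable def zBasis : Fin 2 → Fin 2 → ℂ := ![![1, 0], ![0, 1]]

/-- The eigenbasis of the Pauli `X` operator. -/
noncomputable def xBasis : Fin 2 → Fin 2 → ℂ :=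
  ![![((Real.sqrt 2 : ℂ))⁻¹, ((Real.sqrt 2 : ℂ))⁻¹],
    ![((Real.sqrt 2 : ℂ))⁻¹, -((Real.sqrt 2 : ℂ))⁻¹]]

/-- The eigenbasis of the Pauli `Y` operator. -/
noncomputable def yBasis : Fin 2 → Fin 2 → ℂ :=
  ![![((Real.sqrt 2 : ℂ))⁻¹, Complex.I * ((Real.sqrt 2 : ℂ))⁻¹],
    ![((Real.sqrt 2 : ℂ))⁻¹, -Complex.I * ((Real.sqrt 2 : ℂ))⁻¹]]


section Helpers
open Matrix

noncomputable def Gfun (s : ℝ) : ℝ := (1+s) * Real.log (1+s) + (1-s) * Real.log (1-s)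
noncomputable def kfun (t : ℝ) : ℝ := Gfun (Real.sqrt t)

lemma Gfun_cont : Continuous Gfun := by
  have h1 : Continuous fun s : ℝ => (1+s) * Real.log (1+s) :=
    (Real.continuous_mul_log).comp (continuous_const.add continuous_id)
  have h2 : Continuous fun s : ℝ => (1-s) * Real.log (1-s) :=
    (Real.continuous_mul_log).comp (continuous_const.sub continuous_id)
  exact h1.add h2

lemma kfun_cont : Continuous kfun := Gfun_cont.comp Real.continuous_sqrt

lemma Gfun_hasDeriv {s : ℝ} (h1 : -1 < s) (h2 : s < 1) :
    HasDerivAt Gfun (Real.log (1+s) - Real.log (1-s)) s := by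
  have hp : (0:ℝ) < 1 + s := by linarith
  have hm : (0:ℝ) < 1 - s := by linarith
  have d1 : HasDerivAt (fun s : ℝ => (1+s) * Real.log (1+s)) (Real.log (1+s) + 1) s := by
    have ha : HasDerivAt (fun s : ℝ => 1 + s) 1 s := (hasDerivAt_id s).const_add 1
    have hl : HasDerivAt (fun s : ℝ => Real.log (1+s)) (1/(1+s)) s := by
      simpa [Function.comp_def] using (Real.hasDerivAt_log hp.ne').comp s ha
    have := ha.mul hl
    refine this.congr_deriv ?_
    field_simp
  have d2 : HasDerivAt (fun s : ℝ => (1-s) * Real.log (1-s)) (-(Real.log (1-s) + 1)) s := by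
    have ha : HasDerivAt (fun s : ℝ => 1 - s) (-1) s := (hasDerivAt_id s).neg.const_add 1
    have hl : HasDerivAt (fun s : ℝ => Real.log (1-s)) (-(1/(1-s))) s := by
      simpa [Function.comp_def] using (Real.hasDerivAt_log hm.ne').comp s ha
    have := ha.mul hl
    refine this.congr_deriv ?_
    field_simp
    ring
  have := d1.add d2
  refine this.congr_deriv ?_
  ring

noncomputable def phiF (s : ℝ) : ℝ := 2*s/(1-s^2) - (Real.log (1+s) - Real.log (1-s))

lemma phiF_hasDeriv {s : ℝ} (h1 : -1 < s) (h2 : s < 1) :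
    HasDerivAt phiF (4*s^2/(1-s^2)^2) s := by
  have hp : (0:ℝ) < 1 + s := by linarith
  have hm : (0:ℝ) < 1 - s := by linarith
  have hq : (1:ℝ) - s^2 ≠ 0 := by nlinarith
  have d1 : HasDerivAt (fun s : ℝ => 2*s/(1-s^2)) ((2*(1-s^2) - 2*s*(-(2*s)))/(1-s^2)^2) s := by
    have hnum : HasDerivAt (fun s : ℝ => 2*s) 2 s := by
      simpa using (hasDerivAt_id s).const_mul (2:ℝ)
    have hden : HasDerivAt (fun s : ℝ => 1-s^2) (-(2*s)) s := by
      simpa [pow_one] using (hasDerivAt_pow 2 s).const_sub 1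
    exact hnum.div hden hq
  have d2 : HasDerivAt (fun s : ℝ => Real.log (1+s) - Real.log (1-s))
      (1/(1+s) + 1/(1-s)) s := by
    have ha : HasDerivAt (fun s : ℝ => 1 + s) 1 s := (hasDerivAt_id s).const_add 1
    have hb : HasDerivAt (fun s : ℝ => 1 - s) (-1) s := by
      simpa using (hasDerivAt_id s).const_sub 1
    have hl1 : HasDerivAt (fun s : ℝ => Real.log (1+s)) (1/(1+s)) s := by
      simpa [Function.comp_def] using (Real.hasDerivAt_log hp.ne').comp s ha
    have hl2 : HasDerivAt (fun s : ℝ => Real.log (1-s)) (-(1/(1-s))) s := by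
      simpa [Function.comp_def] using (Real.hasDerivAt_log hm.ne').comp s hb
    simpa [Pi.sub_def] using hl1.sub hl2
  have := d1.sub d2
  refine this.congr_deriv ?_
  field_simp
  ring

lemma phiF_nonneg {s : ℝ} (h0 : 0 ≤ s) (h2 : s < 1) : 0 ≤ phiF s := by
  have hmono : MonotoneOn phiF (Set.Ico (0:ℝ) 1) := by
    apply monotoneOn_of_deriv_nonneg (convex_Ico 0 1)
    · intro x hx
      exact ((phiF_hasDeriv (by linarith [hx.1]) hx.2).continuousAt).continuousWithinAt
    · rw [interior_Ico]
      intro x hx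
      exact ((phiF_hasDeriv (by linarith [hx.1]) hx.2).differentiableAt).differentiableWithinAt
    · rw [interior_Ico]
      intro x hx
      rw [(phiF_hasDeriv (by linarith [hx.1]) hx.2).deriv]
      positivity
  have := hmono (Set.mem_Ico.2 ⟨le_refl 0, by norm_num⟩) (Set.mem_Ico.2 ⟨h0, h2⟩) h0
  have h00 : phiF 0 = 0 := by simp [phiF]
  linarith

noncomputable def gfun (s : ℝ) : ℝ := (Real.log (1+s) - Real.log (1-s))/(2*s)

lemma gfun_mono : MonotoneOn gfun (Set.Ioo (0:ℝ) 1) := by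
  have hderiv : ∀ s ∈ Set.Ioo (0:ℝ) 1, HasDerivAt gfun (phiF s / (2*s^2)) s := by
    intro s hs
    obtain ⟨hs0, hs1⟩ := hs
    have hp : (0:ℝ) < 1 + s := by linarith
    have hm : (0:ℝ) < 1 - s := by linarith
    have dL : HasDerivAt (fun s : ℝ => Real.log (1+s) - Real.log (1-s)) (1/(1+s) + 1/(1-s)) s := by
      have ha : HasDerivAt (fun s : ℝ => 1 + s) 1 s := (hasDerivAt_id s).const_add 1
      have hb : HasDerivAt (fun s : ℝ => 1 - s) (-1) s := by
        simpa using (hasDerivAt_id s).const_sub 1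
      have hl1 : HasDerivAt (fun s : ℝ => Real.log (1+s)) (1/(1+s)) s := by
        simpa [Function.comp_def] using (Real.hasDerivAt_log hp.ne').comp s ha
      have hl2 : HasDerivAt (fun s : ℝ => Real.log (1-s)) (-(1/(1-s))) s := by
        simpa [Function.comp_def] using (Real.hasDerivAt_log hm.ne').comp s hb
      simpa [Pi.sub_def] using hl1.sub hl2
    have dD : HasDerivAt (fun s : ℝ => 2*s) 2 s := by
      simpa using (hasDerivAt_id s).const_mul (2:ℝ)
    have := dL.div dD (by positivity)
    refine this.congr_deriv ?_
    rw [phiF]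
    have hq : (1:ℝ)-s^2 ≠ 0 := by nlinarith
    field_simp
    ring
  apply monotoneOn_of_deriv_nonneg (convex_Ioo 0 1)
  · intro x hx
    exact ((hderiv x hx).continuousAt).continuousWithinAt
  · rw [interior_Ioo]
    intro x hx
    exact ((hderiv x hx).differentiableAt).differentiableWithinAt
  · rw [interior_Ioo]
    intro x hx
    rw [(hderiv x hx).deriv]
    have h1 := phiF_nonneg hx.1.le hx.2
    positivity

lemma kfun_hasDeriv {t : ℝ} (ht0 : 0 < t) (ht1 : t < 1) :
    HasDerivAt kfun (gfun (Real.sqrt t)) t := by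
  have hs0 : 0 < Real.sqrt t := Real.sqrt_pos.2 ht0
  have hs1 : Real.sqrt t < 1 := by
    rw [show (1:ℝ) = Real.sqrt 1 by simp]
    exact Real.sqrt_lt_sqrt ht0.le ht1
  have hsq : HasDerivAt Real.sqrt (1/(2*Real.sqrt t)) t := Real.hasDerivAt_sqrt ht0.ne'
  have hG := Gfun_hasDeriv (by linarith : (-1:ℝ) < Real.sqrt t) hs1
  have := hG.comp t hsq
  refine this.congr_deriv ?_
  rw [gfun]
  field_simp

lemma kfun_convex : ConvexOn ℝ (Set.Icc (0:ℝ) 1) kfun := by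
  apply MonotoneOn.convexOn_of_deriv (convex_Icc 0 1) (kfun_cont.continuousOn)
  · rw [interior_Icc]
    intro x hx
    exact ((kfun_hasDeriv hx.1 hx.2).differentiableAt).differentiableWithinAt
  · rw [interior_Icc]
    intro x hx y hy hxy
    rw [(kfun_hasDeriv hx.1 hx.2).deriv, (kfun_hasDeriv hy.1 hy.2).deriv]
    have hmx : Real.sqrt x ∈ Set.Ioo (0:ℝ) 1 := by
      constructor
      · exact Real.sqrt_pos.2 hx.1
      · rw [show (1:ℝ) = Real.sqrt 1 by simp]
        exact Real.sqrt_lt_sqrt hx.1.le hx.2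
    have hmy : Real.sqrt y ∈ Set.Ioo (0:ℝ) 1 := by
      constructor
      · exact Real.sqrt_pos.2 hy.1
      · rw [show (1:ℝ) = Real.sqrt 1 by simp]
        exact Real.sqrt_lt_sqrt hy.1.le hy.2
    exact gfun_mono hmx hmy (Real.sqrt_le_sqrt hxy)

lemma kfun_zero : kfun 0 = 0 := by simp [kfun, Gfun]

lemma kfun_superadd {x y : ℝ} (hx : 0 ≤ x) (hy : 0 ≤ y) (hxy : x + y ≤ 1) :
    kfun x + kfun y ≤ kfun (x+y) := by
  rcases eq_or_lt_of_le (by linarith : (0:ℝ) ≤ x + y) with h | h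
  · have hx0 : x = 0 := by linarith
    have hy0 : y = 0 := by linarith
    simp [hx0, hy0, kfun_zero]
  · set s := x + y with hs
    have hsmem : s ∈ Set.Icc (0:ℝ) 1 := ⟨h.le, hxy⟩
    have h0mem : (0:ℝ) ∈ Set.Icc (0:ℝ) 1 := ⟨le_refl 0, by norm_num⟩
    have c1 : kfun x ≤ (x/s) * kfun s + (y/s) * kfun 0 := by
      have hcomb := kfun_convex.2 hsmem h0mem (by positivity : 0 ≤ x/s)
        (by positivity : 0 ≤ y/s) (by rw [← add_div, hs, div_self h.ne'])
      have : (x/s) • s + (y/s) • (0:ℝ) = x := by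
        rw [smul_eq_mul, smul_eq_mul, mul_zero, add_zero, div_mul_cancel₀ _ h.ne']
      rw [this] at hcomb
      simpa using hcomb
    have c2 : kfun y ≤ (y/s) * kfun s + (x/s) * kfun 0 := by
      have hcomb := kfun_convex.2 hsmem h0mem (by positivity : 0 ≤ y/s)
        (by positivity : 0 ≤ x/s) (by rw [← add_div, add_comm y x, hs, div_self h.ne'])
      have : (y/s) • s + (x/s) • (0:ℝ) = y := by
        rw [smul_eq_mul, smul_eq_mul, mul_zero, add_zero, div_mul_cancel₀ _ h.ne']
      rw [this] at hcomb
      simpa using hcomb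
    rw [kfun_zero] at c1 c2
    have hdiv : x/s + y/s = 1 := by rw [← add_div, hs, div_self h.ne']
    have hsum : x/s*kfun s + y/s*kfun s = kfun s := by rw [← add_mul, hdiv, one_mul]
    linarith

noncomputable def Hb (p : ℝ) : ℝ := -(p * Real.log p + (1-p) * Real.log (1-p))

lemma Gfun_even (s : ℝ) : Gfun (-s) = Gfun s := by
  rw [Gfun, Gfun, show (1:ℝ) + -s = 1 - s by ring, show (1:ℝ) - -s = 1 + s by ring]
  ring

lemma Hb_eq (p : ℝ) : Hb p = Real.log 2 - kfun ((2*p-1)^2) / 2 := by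
  have hk : kfun ((2*p-1)^2) = Gfun (2*p-1) := by
    rw [kfun, Real.sqrt_sq_eq_abs]
    rcases abs_choice (2*p-1) with h | h
    · rw [h]
    · rw [h, Gfun_even]
  rw [Hb, hk, Gfun]
  have e1 : (1:ℝ) + (2*p-1) = 2*p := by ring
  have e2 : (1:ℝ) - (2*p-1) = 2*(1-p) := by ring
  rw [e1, e2]
  have l1 : 2*p * Real.log (2*p) = 2*p*Real.log 2 + 2*(p * Real.log p) := by
    rcases eq_or_ne p 0 with h | h
    · simp [h]
    · rw [Real.log_mul (by norm_num) h]; ring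
  have l2 : 2*(1-p) * Real.log (2*(1-p)) = 2*(1-p)*Real.log 2 + 2*((1-p) * Real.log (1-p)) := by
    rcases eq_or_ne (1-p) 0 with h | h
    · simp [h]
    · rw [Real.log_mul (by norm_num) h]; ring
  rw [l1, l2]
  ring

lemma key3 {x y z : ℝ} (hx : 0 ≤ x) (hy : 0 ≤ y) (hz : 0 ≤ z) (h : x + y + z ≤ 1) :
    kfun x + kfun y + kfun z ≤ kfun (x+y+z) := by
  have h1 : kfun x + kfun y ≤ kfun (x+y) := kfun_superadd hx hy (by linarith)
  have h2 : kfun (x+y) + kfun z ≤ kfun (x+y+z) := kfun_superadd (by linarith) hz h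
  linarith


theorem trace_eq_sum_eigs {m : Type*} [Fintype m] [DecidableEq m]
    (A : Matrix m m ℂ) (hA : A.IsHermitian) :
    Matrix.trace A = ∑ i, (hA.eigenvalues i : ℂ) := by
  have hU : (star (hA.eigenvectorUnitary : Matrix m m ℂ)) *
      (hA.eigenvectorUnitary : Matrix m m ℂ) = 1 :=
    Matrix.UnitaryGroup.star_mul_self _
  conv_lhs => rw [hA.spectral_theorem, Unitary.conjStarAlgAut_apply]
  rw [Matrix.trace_mul_cycle, hU, Matrix.one_mul, Matrix.trace_diagonal]
  rfl

theorem trace_mul_matFun {m : Type*} [Fintype m] [DecidableEq m]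
    (A : Matrix m m ℂ) (hA : A.IsHermitian) (f : ℝ → ℝ) :
    Matrix.trace (A * matFun f A) = ∑ i, ((hA.eigenvalues i * f (hA.eigenvalues i) : ℝ) : ℂ) := by
  rw [matFun, dif_pos hA]
  set U : Matrix m m ℂ := (hA.eigenvectorUnitary : Matrix m m ℂ) with hUdef
  set D : Matrix m m ℂ := Matrix.diagonal (fun i => (f (hA.eigenvalues i) : ℂ)) with hDdef
  have key : star U * A * U = diagonal (RCLike.ofReal ∘ hA.eigenvalues) :=
    by have := hA.conjStarAlgAut_star_eigenvectorUnitary; rwa [Unitary.conjStarAlgAut_star_apply] at this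
  have e1 : A * (U * D * star U) = (A * U * D) * star U := by noncomm_ring
  rw [e1, Matrix.trace_mul_comm]
  have e2 : star U * (A * U * D) = (star U * A * U) * D := by noncomm_ring
  rw [e2, key, Matrix.diagonal_mul_diagonal, Matrix.trace_diagonal]
  push_cast
  rfl

end Helpers

set_option maxHeartbeats 2000000 in
/-- qubit three-MUB uncertainty relation with mixedness:
`H(x) + H(y) + H(z) ≥ 2 log 2 + S(ρ)`. -/
theorem qubit_three_mub_uncertainty (ρ : Matrix (Fin 2) (Fin 2) ℂ) (hρ : IsDensity ρ) :
    shannon (fun j => (Matrix.trace (projVec (xBasis j) * ρ)).re) +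
    shannon (fun j => (Matrix.trace (projVec (yBasis j) * ρ)).re) +
    shannon (fun j => (Matrix.trace (projVec (zBasis j) * ρ)).re) ≥
      2 * Real.log 2 + vN ρ := by
  obtain ⟨hpsd, htr⟩ := hρ
  have hH : ρ.IsHermitian := hpsd.1
  have h10 : ρ 1 0 = (starRingEnd ℂ) (ρ 0 1) := by
    conv_lhs => rw [← hH]
    simp [Matrix.conjTranspose_apply]
  have him0 : (ρ 0 0).im = 0 := by
    have : (starRingEnd ℂ) (ρ 0 0) = ρ 0 0 := by
      conv_rhs => rw [← hH]
      simp [Matrix.conjTranspose_apply]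
    have h2 : -(ρ 0 0).im = (ρ 0 0).im := by
      simpa [Complex.ext_iff] using congrArg Complex.im this
    linarith
  have him1 : (ρ 1 1).im = 0 := by
    have : (starRingEnd ℂ) (ρ 1 1) = ρ 1 1 := by
      conv_rhs => rw [← hH]
      simp [Matrix.conjTranspose_apply]
    have h2 : -(ρ 1 1).im = (ρ 1 1).im := by
      simpa [Complex.ext_iff] using congrArg Complex.im this
    linarith
  set a := (ρ 0 0).re with ha_def
  set d := (ρ 1 1).re with hd_def
  set cR := (ρ 0 1).re with hcR_def
  set cI := (ρ 0 1).im with hcI_def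
  have had : a + d = 1 := by
    have := congrArg Complex.re htr
    simpa [Matrix.trace, Fin.sum_univ_two, Matrix.diag] using this
  have hrt : Real.sqrt 2 * Real.sqrt 2 = 2 := Real.mul_self_sqrt (by norm_num)
  have h12 : Real.sqrt 2/2 * (Real.sqrt 2/2) = 1/2 := by
    rw [div_mul_div_comm, hrt]; norm_num
  -- probabilities
  have hx0 : (Matrix.trace (projVec (xBasis 0) * ρ)).re = 1/2 + cR := by
    simp [Matrix.trace, Matrix.mul_apply, projVec, Matrix.vecMulVec_apply, Fin.sum_univ_two, -Matrix.cons_vecMulVec, -Matrix.vecMulVec_cons,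
      xBasis, h10, Matrix.diag]
    rw [h12]
    linarith [had]
  have hx1 : (Matrix.trace (projVec (xBasis 1) * ρ)).re = 1/2 - cR := by
    simp [Matrix.trace, Matrix.mul_apply, projVec, Matrix.vecMulVec_apply, Fin.sum_univ_two, -Matrix.cons_vecMulVec, -Matrix.vecMulVec_cons,
      xBasis, h10, Matrix.diag]
    rw [h12]
    linarith [had]
  have hy0 : (Matrix.trace (projVec (yBasis 0) * ρ)).re = 1/2 - cI := by
    simp [Matrix.trace, Matrix.mul_apply, projVec, Matrix.vecMulVec_apply, Fin.sum_univ_two, -Matrix.cons_vecMulVec, -Matrix.vecMulVec_cons,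
      yBasis, h10, Matrix.diag]
    rw [h12]
    linarith [had]
  have hy1 : (Matrix.trace (projVec (yBasis 1) * ρ)).re = 1/2 + cI := by
    simp [Matrix.trace, Matrix.mul_apply, projVec, Matrix.vecMulVec_apply, Fin.sum_univ_two, -Matrix.cons_vecMulVec, -Matrix.vecMulVec_cons,
      yBasis, h10, Matrix.diag]
    rw [h12]
    linarith [had]
  have hz0 : (Matrix.trace (projVec (zBasis 0) * ρ)).re = a := by
    simp [Matrix.trace, Matrix.mul_apply, projVec, Matrix.vecMulVec_apply, Fin.sum_univ_two, -Matrix.cons_vecMulVec, -Matrix.vecMulVec_cons,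
      zBasis, Matrix.diag]
    rfl
  have hz1 : (Matrix.trace (projVec (zBasis 1) * ρ)).re = d := by
    simp [Matrix.trace, Matrix.mul_apply, projVec, Matrix.vecMulVec_apply, Fin.sum_univ_two, -Matrix.cons_vecMulVec, -Matrix.vecMulVec_cons,
      zBasis, Matrix.diag]
    rfl
  -- eigenvalues
  set l0 := hH.eigenvalues 0 with hl0
  set l1 := hH.eigenvalues 1 with hl1
  have hsum : l0 + l1 = 1 := by
    have h := trace_eq_sum_eigs ρ hH
    rw [htr, Fin.sum_univ_two] at h
    have := congrArg Complex.re h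
    simpa using this.symm
  have hnn0 : (0:ℝ) ≤ l0 := hpsd.eigenvalues_nonneg 0
  have hnn1 : (0:ℝ) ≤ l1 := hpsd.eigenvalues_nonneg 1
  have hdet : l0 * l1 = a*d - (cR^2 + cI^2) := by
    have h := hH.det_eq_prod_eigenvalues
    rw [Fin.prod_univ_two, Matrix.det_fin_two, h10] at h
    have h2 := congrArg Complex.re h
    simp only [Complex.sub_re, Complex.mul_re, Complex.conj_re, Complex.conj_im,
      Complex.ofReal_re, Complex.ofReal_im, him0, him1] at h2
    rw [← hcR_def, ← hcI_def, ← ha_def, ← hd_def] at h2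
    simp at h2
    nlinarith [h2]
  have hvN : vN ρ = Hb l0 := by
    rw [vN, matLog, trace_mul_matFun ρ hH Real.log, Fin.sum_univ_two]
    rw [show ((l0 * Real.log l0 : ℝ):ℂ) + ((l1 * Real.log l1 : ℝ):ℂ)
        = (((l0*Real.log l0 + l1*Real.log l1 : ℝ)):ℂ) by push_cast; ring]
    rw [Complex.ofReal_re, Hb, show l1 = 1 - l0 by linarith]
  -- main computation
  simp only [shannon, Fin.sum_univ_two]
  rw [hx0, hx1, hy0, hy1, hz0, hz1, hvN]
  have e1 : -((1/2+cR) * Real.log (1/2+cR) + (1/2-cR) * Real.log (1/2-cR)) = Hb (1/2+cR) := by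
    rw [Hb, show (1:ℝ) - (1/2+cR) = 1/2 - cR by ring]
  have e2 : -((1/2-cI) * Real.log (1/2-cI) + (1/2+cI) * Real.log (1/2+cI)) = Hb (1/2-cI) := by
    rw [Hb, show (1:ℝ) - (1/2-cI) = 1/2 + cI by ring]
  have e3 : -(a * Real.log a + d * Real.log d) = Hb a := by
    rw [Hb, show (1:ℝ) - a = d by linarith]
  rw [e1, e2, e3, Hb_eq, Hb_eq, Hb_eq, Hb_eq]
  rw [show ((2*(1/2+cR)-1):ℝ)^2 = (2*cR)^2 by ring,
      show ((2*(1/2-cI)-1):ℝ)^2 = (2*cI)^2 by ring]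
  have hA : (2*l0-1)^2 = 1 - 4*(l0*l1) := by
    rw [show l1 = 1-l0 by linarith]; ring
  have sumT : (2*cR)^2 + (2*cI)^2 + (2*a-1)^2 = (2*l0-1)^2 := by
    rw [hA, hdet, show d = 1-a by linarith]; ring
  have hT1 : (2*cR)^2 + (2*cI)^2 + (2*a-1)^2 ≤ 1 := by
    have hp := mul_nonneg hnn0 hnn1
    rw [sumT, hA]; linarith
  have key := key3 (sq_nonneg (2*cR)) (sq_nonneg (2*cI)) (sq_nonneg (2*a-1)) hT1
  rw [sumT] at key
  linarith [key]
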